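/- A countable linear order L is scattered if and only if some iterate of the Hausdorff derivative of L collapses L to a single equivalence class (i.e., the relation H_α eventually equals L × L). -/

import Mathlib

noncomputable section

/-- Given a relation `E` on a linear order, `hausdorffRel E a b` says that the closed
interval between `a` and `b` is covered by finitely many `E`-classes; when `E` is an
equivalence relation this is the pullback of the Hausdorff relation on the quotient. -/
def hausdorffRel {L : Type*} [LinearOrder L] (E : L → L → Prop) (a b : L) : Prop :=
  ∃ s : Finset L, ∀ c : L, min a b ≤ c → c ≤ max a b → ∃ d ∈ s, E c d

/-- The transfinite iterates of the Hausdorff derivative relation on a linear order `L`: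
`H_0` is equality, `H_{α+1}` is the pullback of the Hausdorff relation on the quotient
`L / H_α`, and at limits one takes unions. -/
def hausdorffIter (L : Type*) [LinearOrder L] (γ : Ordinal.{0}) : L → L → Prop :=
  Ordinal.limitRecOn (motive := fun _ => L → L → Prop) γ Eq
    (fun _ IH => hausdorffRel IH)
    (fun γ _ IH a b => ∃ β : Ordinal.{0}, ∃ h : β < γ, IH β h a b)

/-- A linear order is scattered if the rationals do not order-embed into it. -/
def Scattered (L : Type*) [LinearOrder L] : Prop :=
  ¬ ∃ e : ℚ → L, ∀ q r : ℚ, q < r → e q < e r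

end

section Lemmas

variable {L : Type*} [LinearOrder L]

theorem hausdorffIter_zero : hausdorffIter L 0 = Eq :=
  Ordinal.limitRecOn_zero _ _ _

theorem hausdorffIter_succ (γ : Ordinal.{0}) :
    hausdorffIter L (Order.succ γ) = hausdorffRel (hausdorffIter L γ) :=
  Ordinal.limitRecOn_succ _ _ _ _

theorem hausdorffIter_limit {γ : Ordinal.{0}} (h : Order.IsSuccLimit γ) (a b : L) :
    hausdorffIter L γ a b ↔ ∃ β : Ordinal.{0}, β < γ ∧ hausdorffIter L β a b := by
  rw [hausdorffIter, Ordinal.limitRecOn_limit _ _ _ _ h]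
  exact ⟨fun ⟨β, hβ, h⟩ => ⟨β, hβ, h⟩, fun ⟨β, hβ, h⟩ => ⟨β, hβ, h⟩⟩

/-- Convexity: `E a b` and `a ≤ c ≤ b` gives `E a c`. -/
def HConvex (E : L → L → Prop) : Prop :=
  ∀ a b c : L, E a b → a ≤ c → c ≤ b → E a c

theorem hausdorffRel_equivalence {E : L → L → Prop} (hE : Equivalence E) :
    Equivalence (hausdorffRel E) := by
  constructor
  · intro a
    exact ⟨{a}, fun c h1 h2 => ⟨a, Finset.mem_singleton_self a, by
      simp only [min_self, max_self] at h1 h2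
      exact (le_antisymm h2 h1) ▸ hE.refl c⟩⟩
  · rintro a b ⟨s, hs⟩
    exact ⟨s, by rwa [min_comm b a, max_comm b a]⟩
  · rintro a b c ⟨s, hs⟩ ⟨t, ht⟩
    refine ⟨s ∪ t, fun x h1 h2 => ?_⟩
    rcases le_total x b with hxb | hbx
    · rcases min_le_iff.mp h1 with hax | hcx
      · obtain ⟨d, hd, hE'⟩ := hs x (le_trans (min_le_left a b) hax) (le_trans hxb (le_max_right a b))
        exact ⟨d, Finset.mem_union_left _ hd, hE'⟩
      · obtain ⟨d, hd, hE'⟩ := ht x (le_trans (min_le_right b c) hcx) (le_trans hxb (le_max_left b c))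
        exact ⟨d, Finset.mem_union_right _ hd, hE'⟩
    · rcases le_max_iff.mp h2 with hxa | hxc
      · obtain ⟨d, hd, hE'⟩ := hs x (le_trans (min_le_right a b) hbx) (le_trans hxa (le_max_left a b))
        exact ⟨d, Finset.mem_union_left _ hd, hE'⟩
      · obtain ⟨d, hd, hE'⟩ := ht x (le_trans (min_le_left b c) hbx) (le_trans hxc (le_max_right b c))
        exact ⟨d, Finset.mem_union_right _ hd, hE'⟩

theorem hausdorffRel_convex {E : L → L → Prop} : HConvex (hausdorffRel E) := by
  rintro a b c ⟨s, hs⟩ hac hcb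
  refine ⟨s, fun x h1 h2 => ?_⟩
  rw [min_eq_left (le_trans hac hcb), max_eq_right (le_trans hac hcb)] at hs
  rw [min_eq_left hac] at h1
  rw [max_eq_right hac] at h2
  exact hs x h1 (le_trans h2 hcb)

theorem hausdorffRel_mono {E E' : L → L → Prop} (h : ∀ a b, E a b → E' a b) :
    ∀ a b, hausdorffRel E a b → hausdorffRel E' a b := by
  rintro a b ⟨s, hs⟩
  exact ⟨s, fun c h1 h2 => (hs c h1 h2).imp fun d ⟨hd, he⟩ => ⟨hd, h _ _ he⟩⟩

theorem le_hausdorffRel {E : L → L → Prop} (hE : Equivalence E) (hC : HConvex E) :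
    ∀ a b, E a b → hausdorffRel E a b := by
  intro a b hab
  refine ⟨{a}, fun c h1 h2 => ⟨a, Finset.mem_singleton_self a, ?_⟩⟩
  rcases le_total a b with h | h
  · rw [min_eq_left h] at h1; rw [max_eq_right h] at h2
    exact hE.symm (hC a b c hab h1 h2)
  · rw [min_eq_right h] at h1; rw [max_eq_left h] at h2
    exact hE.trans (hE.symm (hC b a c (hE.symm hab) h1 h2)) (hE.symm hab)

/-- The main structural properties of `hausdorffIter`, proved by transfinite induction. -/
theorem hausdorffIter_props (γ : Ordinal.{0}) :
    Equivalence (hausdorffIter L γ) ∧ HConvex (hausdorffIter L γ) ∧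
      ∀ β ≤ γ, ∀ a b : L, hausdorffIter L β a b → hausdorffIter L γ a b := by
  induction γ using Ordinal.induction with
  | _ γ IH =>
  rcases Ordinal.zero_or_succ_or_isSuccLimit γ with h0 | ⟨δ, rfl⟩ | hlim
  · subst h0
    rw [hausdorffIter_zero]
    refine ⟨eq_equivalence, fun a b c hab h1 h2 => ?_, fun β hβ => ?_⟩
    · subst hab; exact le_antisymm h1 h2
    · rw [nonpos_iff_eq_zero.mp hβ]; intro a b h; rwa [hausdorffIter_zero] at h
  · have hδ : δ < Order.succ δ := Order.lt_succ δ
    obtain ⟨hEq, hCv, hMono⟩ := IH δ hδ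
    rw [hausdorffIter_succ]
    refine ⟨hausdorffRel_equivalence hEq, hausdorffRel_convex, fun β hβ a b hab => ?_⟩
    rcases lt_or_eq_of_le hβ with h | rfl
    · exact le_hausdorffRel hEq hCv a b (hMono β (Order.lt_succ_iff.mp h) a b hab)
    · rwa [hausdorffIter_succ] at hab
  · have hm : ∀ β ≤ γ, ∀ a b : L, hausdorffIter L β a b → hausdorffIter L γ a b := by
      intro β hβ a b hab
      rcases lt_or_eq_of_le hβ with h | rfl
      · exact (hausdorffIter_limit hlim a b).mpr ⟨β, h, hab⟩
      · exact hab
    refine ⟨⟨?_, ?_, ?_⟩, ?_, hm⟩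
    · intro a
      exact (hausdorffIter_limit hlim a a).mpr ⟨0, hlim.pos, by rw [hausdorffIter_zero]⟩
    · intro a b hab
      obtain ⟨β, hβ, h⟩ := (hausdorffIter_limit hlim a b).mp hab
      exact (hausdorffIter_limit hlim b a).mpr ⟨β, hβ, (IH β hβ).1.symm h⟩
    · intro a b c hab hbc
      obtain ⟨β₁, hβ₁, h1⟩ := (hausdorffIter_limit hlim a b).mp hab
      obtain ⟨β₂, hβ₂, h2⟩ := (hausdorffIter_limit hlim b c).mp hbc
      have hβ : max β₁ β₂ < γ := max_lt hβ₁ hβ₂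
      obtain ⟨hEq, _, hMono⟩ := IH _ hβ
      exact (hausdorffIter_limit hlim a c).mpr
        ⟨_, hβ, hEq.trans (hMono β₁ (le_max_left _ _) _ _ h1) (hMono β₂ (le_max_right _ _) _ _ h2)⟩
    · intro a b c hab h1 h2
      obtain ⟨β, hβ, h⟩ := (hausdorffIter_limit hlim a b).mp hab
      exact (hausdorffIter_limit hlim a c).mpr ⟨β, hβ, (IH β hβ).2.1 a b c h h1 h2⟩

end Lemmas

section Backward

variable {L : Type*} [LinearOrder L]

theorem not_hausdorffIter_of_embedding (e : ℚ → L) (he : ∀ q r : ℚ, q < r → e q < e r)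
    (γ : Ordinal.{0}) : ∀ q r : ℚ, q < r → ¬ hausdorffIter L γ (e q) (e r) := by
  induction γ using Ordinal.induction with
  | _ γ IH =>
  rcases Ordinal.zero_or_succ_or_isSuccLimit γ with h0 | ⟨δ, rfl⟩ | hlim
  · subst h0
    intro q r hqr h
    rw [hausdorffIter_zero] at h
    exact absurd h (ne_of_lt (he q r hqr))
  · intro q r hqr h
    rw [hausdorffIter_succ] at h
    obtain ⟨s, hs⟩ := h
    have her : e q < e r := he q r hqr
    rw [min_eq_left her.le, max_eq_right her.le] at hs
    -- infinitely many rationals in (q, r)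
    set t : ℕ → ℚ := fun n => q + (r - q) / (n + 2) with ht
    have htm : ∀ n : ℕ, q < t n ∧ t n < r := by
      intro n
      have h2 : (0:ℚ) < (n:ℚ) + 2 := by positivity
      have hrq : (0:ℚ) < r - q := sub_pos.mpr hqr
      constructor
      · have : (0:ℚ) < (r - q) / (n + 2) := div_pos hrq h2
        simp [ht]; linarith
      · have : (r - q) / (n + 2) < r - q := by
          rw [div_lt_iff₀ h2]
          nlinarith
        simp [ht]; linarith
    have htinj : Function.Injective t := by
      intro m n hmn
      have hrq : (0:ℚ) < r - q := sub_pos.mpr hqr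
      have h2 : (0:ℚ) < (m:ℚ) + 2 := by positivity
      have h3 : (0:ℚ) < (n:ℚ) + 2 := by positivity
      simp only [ht, add_right_inj] at hmn
      rw [div_eq_div_iff (ne_of_gt h2) (ne_of_gt h3)] at hmn
      have h := mul_left_cancel₀ (ne_of_gt hrq) hmn
      have : (m:ℚ) = n := by linarith
      exact_mod_cast this
    -- choose a class representative for each t n
    have hch : ∀ n : ℕ, ∃ d ∈ s, hausdorffIter L δ (e (t n)) d := by
      intro n
      exact hs (e (t n)) (he q (t n) (htm n).1).le (he (t n) r (htm n).2).le
    choose d hd hrel using hch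
    have : ∃ m n : ℕ, m ≠ n ∧ (⟨d m, hd m⟩ : {x // x ∈ s}) = ⟨d n, hd n⟩ :=
      Finite.exists_ne_map_eq_of_infinite _
    obtain ⟨m, n, hmn, hdeq⟩ := this
    have hdeq' : d m = d n := congrArg Subtype.val hdeq
    have hEq := (hausdorffIter_props (L := L) δ).1
    have hrel2 : hausdorffIter L δ (e (t m)) (e (t n)) :=
      hEq.trans (hrel m) (hdeq' ▸ hEq.symm (hrel n))
    rcases lt_trichotomy (t m) (t n) with h | h | h
    · exact IH δ (Order.lt_succ δ) (t m) (t n) h hrel2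
    · exact hmn (htinj h)
    · exact IH δ (Order.lt_succ δ) (t n) (t m) h (hEq.symm hrel2)
  · intro q r hqr h
    obtain ⟨β, hβ, h⟩ := (hausdorffIter_limit hlim _ _).mp h
    exact IH β hβ q r hqr h

end Backward

section Forward

variable {L : Type} [LinearOrder L]

theorem exists_hausdorff_fixed_point (L : Type) [LinearOrder L] :
    ∃ γ : Ordinal.{0}, ∀ a b : L,
      hausdorffIter L (Order.succ γ) a b ↔ hausdorffIter L γ a b := by
  by_contra h
  push_neg at h
  have key : ∀ β δ : Ordinal.{0}, β < δ →
      (hausdorffIter L β : L → L → Prop) ≠ hausdorffIter L δ := by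
    intro β δ hlt hEq'
    obtain ⟨a, b, hab⟩ := h β
    have hiff : hausdorffIter L (Order.succ β) a b ↔ hausdorffIter L β a b := by
      constructor
      · intro h1
        have h2 : hausdorffIter L δ a b :=
          (hausdorffIter_props (L := L) δ).2.2 _ (Order.succ_le_of_lt hlt) a b h1
        rwa [← hEq'] at h2
      · intro h1
        rw [hausdorffIter_succ]
        exact le_hausdorffRel (hausdorffIter_props (L := L) β).1
          (hausdorffIter_props (L := L) β).2.1 a b h1
    rcases hab with ⟨h1, h2⟩ | ⟨h1, h2⟩
    · exact h2 (hiff.mp h1)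
    · exact h1 (hiff.mpr h2)
  have hinj : Function.Injective (fun γ : Ordinal.{0} => (hausdorffIter L γ : L → L → Prop)) := by
    intro β δ hbd
    by_contra hne'
    rcases Ne.lt_or_gt hne' with hlt | hlt
    · exact key β δ hlt hbd
    · exact key δ β hlt hbd.symm
  exact not_injective_of_ordinal _ hinj

end Forward

section Construction

theorem not_scattered_of_fixed (L : Type) [LinearOrder L] [Countable L] {γ : Ordinal.{0}}
    (hfix : ∀ a b : L, hausdorffIter L (Order.succ γ) a b ↔ hausdorffIter L γ a b)
    {a b : L} (hab : a < b) (hnab : ¬ hausdorffIter L γ a b) :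
    ∃ e : ℚ → L, ∀ q r : ℚ, q < r → e q < e r := by
  classical
  set E : L → L → Prop := hausdorffIter L γ with hEdef
  have hEq : Equivalence E := (hausdorffIter_props (L := L) γ).1
  have hCv : HConvex E := (hausdorffIter_props (L := L) γ).2.1
  have hcollapse : ∀ x y : L, hausdorffRel E x y → E x y := by
    intro x y h
    exact (hfix x y).mp (by rw [hausdorffIter_succ]; exact h)
  have split : ∀ x y : L, x < y → ¬E x y → ∃ c, x < c ∧ c < y ∧ ¬E c x ∧ ¬E c y := by
    intro x y hxy hne
    have hnh : ¬ hausdorffRel E x y := fun h => hne (hcollapse x y h)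
    rw [hausdorffRel] at hnh
    push_neg at hnh
    obtain ⟨c, h1, h2, h3⟩ := hnh {x, y}
    rw [min_eq_left hxy.le] at h1
    rw [max_eq_right hxy.le] at h2
    have hcx : ¬E c x := h3 x (by simp)
    have hcy : ¬E c y := h3 y (by simp)
    refine ⟨c, lt_of_le_of_ne h1 ?_, lt_of_lt_of_le ?_ le_rfl, hcx, hcy⟩
    · rintro rfl; exact hcx (hEq.refl x)
    · exact lt_of_le_of_ne h2 fun he => hcy (he ▸ hEq.refl c)
  set st : Setoid L := ⟨E, hEq⟩ with hst
  set r : L → L := fun c => Quotient.out (Quotient.mk st c) with hrdef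
  have hr1 : ∀ c, E (r c) c := fun c => Quotient.mk_out (s := st) c
  have hr2 : ∀ c c', E c c' → r c = r c' := fun c c' h =>
    congrArg Quotient.out (Quotient.sound h)
  have key : ∀ x y : L, x < y → ¬E x y →
      ∃ c, x < c ∧ c < y ∧ r c = c ∧ ¬E c x ∧ ¬E c y := by
    intro x y hxy hne
    obtain ⟨c, h1, h2, h3, h4⟩ := split x y hxy hne
    have hrcx : ¬E (r c) x := fun h => h3 (hEq.trans (hEq.symm (hr1 c)) h)
    have hrcy : ¬E (r c) y := fun h => h4 (hEq.trans (hEq.symm (hr1 c)) h)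
    refine ⟨r c, ?_, ?_, hr2 _ _ (hr1 c), hrcx, hrcy⟩
    · by_contra hle
      push_neg at hle
      exact h3 (hEq.trans (hEq.symm (hr1 c)) (hCv (r c) c x (hr1 c) hle h1.le))
    · by_contra hle
      push_neg at hle
      exact h4 (hCv c (r c) y (hEq.symm (hr1 c)) h2.le hle)
  -- the dense suborder
  set S := {c : L // r c = c ∧ a < c ∧ c < b} with hS
  have hdistinct : ∀ x y : S, x.val ≠ y.val → ¬E x.val y.val := by
    intro x y hne h
    exact hne (x.2.1 ▸ y.2.1 ▸ hr2 x.val y.val h)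
  obtain ⟨c₀, hc₀1, hc₀2, hc₀r, hc₀a, hc₀b⟩ := key a b hab hnab
  obtain ⟨c₁, hc₁1, hc₁2, hc₁r, _, _⟩ :=
    key a c₀ hc₀1 (fun h => hc₀a (hEq.symm h))
  haveI : Nonempty S := ⟨⟨c₀, hc₀r, hc₀1, hc₀2⟩⟩
  haveI : Nontrivial S :=
    ⟨⟨⟨c₁, hc₁r, hc₁1, hc₁2.trans hc₀2⟩, ⟨c₀, hc₀r, hc₀1, hc₀2⟩,
      fun h => absurd (congrArg Subtype.val h) (ne_of_lt hc₁2)⟩⟩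
  haveI : DenselyOrdered S := by
    constructor
    rintro ⟨x, hxr, hxa, hxb⟩ ⟨y, hyr, hya, hyb⟩ hxy
    have hxy' : x < y := hxy
    obtain ⟨c, h1, h2, h3, _, _⟩ := key x y hxy'
      (hdistinct ⟨x, hxr, hxa, hxb⟩ ⟨y, hyr, hya, hyb⟩ (ne_of_lt hxy'))
    exact ⟨⟨c, h3, hxa.trans h1, h2.trans hyb⟩, h1, h2⟩
  obtain ⟨f⟩ := Order.embedding_from_countable_to_dense (α := ℚ) (β := S)
  exact ⟨fun q => (f q).val, fun q r' h => Subtype.coe_lt_coe.mpr (f.strictMono h)⟩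

end Construction


/-- a countable linear order `L` is scattered if and only if some transfinite
iterate of the Hausdorff derivative collapses `L` to a single class, i.e. the relation
`H_γ` eventually relates any two points of `L`. -/
theorem scattered_iff_hausdorff_collapses (L : Type) [LinearOrder L] [Countable L] :
    Scattered L ↔ ∃ γ : Ordinal.{0}, ∀ a b : L, hausdorffIter L γ a b := by
  constructor
  · intro hscat
    obtain ⟨γ, hfix⟩ := exists_hausdorff_fixed_point L
    refine ⟨γ, ?_⟩
    by_contra h
    push_neg at h
    obtain ⟨a, b, hnab⟩ := h
    rcases lt_trichotomy a b with hab | rfl | hab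
    · exact hscat (not_scattered_of_fixed L hfix hab hnab)
    · exact hnab ((hausdorffIter_props (L := L) γ).1.refl a)
    · exact hscat (not_scattered_of_fixed L hfix hab
        fun h' => hnab ((hausdorffIter_props (L := L) γ).1.symm h'))
  · rintro ⟨γ, h⟩ ⟨e, he⟩
    exact not_hausdorffIter_of_embedding e he γ 0 1 (by norm_num) (h _ _)
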